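/- arXiv:0906.3062 — 2 statements merged into one kernel-verified Lean document; each statement's English description precedes it below -/
import Mathlib

section
/- Let H : ℝ² → ℝ be C¹ and consider the planar vector field X(q,p) = (∂H/∂p, -∂H/∂q + F(q,p)) where F is continuous. If F(q,p) ≠ 0 at some point (q₀,p₀) with ∂H/∂p(q₀,p₀) ≠ 0, then there exists a C¹ function W of q alone, defined on a neighborhood of the solution curve through (q₀,p₀), such that the solution of the Hamiltonian system with Hamiltonian Ĥ = H - W through (q₀,p₀) coincides locally with the solution of X through (q₀,p₀). -/
/-- Partial derivative of `H : ℝ × ℝ → ℝ` in the `q` direction. -/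
noncomputable def pdq (H : ℝ × ℝ → ℝ) (x : ℝ × ℝ) : ℝ := fderiv ℝ H x (1, 0)

/-- Partial derivative of `H : ℝ × ℝ → ℝ` in the `p` direction. -/
noncomputable def pdp (H : ℝ × ℝ → ℝ) (x : ℝ × ℝ) : ℝ := fderiv ℝ H x (0, 1)

theorem stmt_2 (H : ℝ × ℝ → ℝ) (hH : ContDiff ℝ 1 H)
    (F : ℝ × ℝ → ℝ) (hF : Continuous F)
    (q₀ p₀ : ℝ) (γ : ℝ → ℝ × ℝ) (hγ0 : γ 0 = (q₀, p₀))
    (hγ : ∀ t, HasDerivAt γ (pdp H (γ t), -pdq H (γ t) + F (γ t)) t)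
    (hF0 : F (q₀, p₀) ≠ 0) (hHp0 : pdp H (q₀, p₀) ≠ 0) :
    ∃ ε > 0, ∃ W : ℝ → ℝ, ContDiff ℝ 1 W ∧
      ∀ t : ℝ, |t| < ε →
        HasDerivAt γ
          (pdp (fun x => H x - W x.1) (γ t), -pdq (fun x => H x - W x.1) (γ t)) t := by
  classical
  -- γ is continuous
  have hγcont : Continuous γ := by
    rw [continuous_iff_continuousAt]
    exact fun t => (hγ t).continuousAt
  -- pdp H is continuous
  have hfderiv_cont : Continuous (fderiv ℝ H) := hH.continuous_fderiv one_ne_zero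
  have hpdp_cont : Continuous (pdp H) := hfderiv_cont.clm_apply continuous_const
  -- q := first component of γ
  set q : ℝ → ℝ := fun t => (γ t).1 with hq_def
  have hq : ∀ t, HasDerivAt q (pdp H (γ t)) t := by
    intro t
    have := (ContinuousLinearMap.fst ℝ ℝ ℝ).hasFDerivAt.comp_hasDerivAt t (hγ t)
    simp at this; exact this
  have hq0 : q 0 = q₀ := by simp [hq_def, hγ0]
  -- strict derivative of q at 0
  have hqs : HasStrictDerivAt q (pdp H (γ 0)) 0 :=
    hasStrictDerivAt_of_hasDerivAt_of_continuousAt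
      (Filter.Eventually.of_forall hq) ((hpdp_cont.comp hγcont).continuousAt)
  have hc0 : pdp H (γ 0) ≠ 0 := by rw [hγ0]; exact hHp0
  -- local inverse of q
  set e : OpenPartialHomeomorph ℝ ℝ :=
    (hqs.hasStrictFDerivAt_equiv hc0).toOpenPartialHomeomorph q with he_def
  have he_coe : (e : ℝ → ℝ) = q :=
    (hqs.hasStrictFDerivAt_equiv hc0).toOpenPartialHomeomorph_coe
  have h0mem : (0 : ℝ) ∈ e.source :=
    (hqs.hasStrictFDerivAt_equiv hc0).mem_toOpenPartialHomeomorph_source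
  have hq0mem : q₀ ∈ e.target := by
    have := (hqs.hasStrictFDerivAt_equiv hc0).image_mem_toOpenPartialHomeomorph_target
    rwa [hq0] at this
  -- g : continuous on e.target
  set g : ℝ → ℝ := fun y => F (γ (e.symm y)) with hg_def
  have hgcont : ContinuousOn g e.target :=
    (hF.comp hγcont).comp_continuousOn e.symm.continuousOn
  -- choose δ with closed ball around q₀ inside e.target
  obtain ⟨r, hr, hball⟩ := Metric.isOpen_iff.1 e.open_target q₀ hq0mem
  set δ : ℝ := r / 2 with hδ_def
  have hδpos : 0 < δ := by positivity
  have hIcc_sub : Set.Icc (q₀ - δ) (q₀ + δ) ⊆ e.target := by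
    intro y hy
    apply hball
    rw [Metric.mem_ball, Real.dist_eq]
    rw [abs_sub_lt_iff]
    constructor <;> [linarith [hy.2]; linarith [hy.1]]
  -- clamp and globally continuous g̃
  set cl : ℝ → ℝ := fun y => max (q₀ - δ) (min y (q₀ + δ)) with hcl_def
  have hcl_cont : Continuous cl := continuous_const.max (continuous_id.min continuous_const)
  have hcl_mem : ∀ y, cl y ∈ Set.Icc (q₀ - δ) (q₀ + δ) := by
    intro y
    constructor
    · exact le_max_left _ _
    · exact max_le (by linarith) (min_le_right _ _)
  have hgt : Continuous (fun y => g (cl y)) :=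
    (hgcont.mono hIcc_sub).comp_continuous hcl_cont (fun y => hcl_mem y)
  -- W : primitive of g ∘ cl
  set g' : ℝ → ℝ := fun y => g (cl y) with hg'_def
  set W : ℝ → ℝ := fun x => ∫ y in (q₀:ℝ)..x, g' y with hW_def
  have hW' : ∀ x, HasDerivAt W (g' x) x := fun x =>
    (hgt.integral_hasStrictDerivAt q₀ x).hasDerivAt
  have hWc1 : ContDiff ℝ 1 W := by
    rw [contDiff_one_iff_deriv]
    refine ⟨fun x => (hW' x).differentiableAt, ?_⟩
    have : deriv W = g' := funext fun x => (hW' x).deriv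
    rw [this]; exact hgt
  -- choose ε
  have hev : ∀ᶠ t in nhds (0:ℝ), t ∈ e.source ∧ q t ∈ Set.Icc (q₀ - δ) (q₀ + δ) := by
    have h1 : ∀ᶠ t in nhds (0:ℝ), t ∈ e.source := e.open_source.mem_nhds h0mem
    have h2 : ∀ᶠ t in nhds (0:ℝ), q t ∈ Set.Icc (q₀ - δ) (q₀ + δ) := by
      have hqc : ContinuousAt q 0 := (hq 0).continuousAt
      have : Set.Icc (q₀ - δ) (q₀ + δ) ∈ nhds (q 0) := by
        rw [hq0]
        exact Icc_mem_nhds (by linarith) (by linarith)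
      exact hqc this
    exact h1.and h2
  obtain ⟨ε, hεpos, hε⟩ := Metric.eventually_nhds_iff.1 hev
  refine ⟨ε, hεpos, W, hWc1, ?_⟩
  intro t ht
  have htt : t ∈ e.source ∧ q t ∈ Set.Icc (q₀ - δ) (q₀ + δ) := by
    apply hε
    simpa [Real.dist_eq] using ht
  -- key: deriv W at q t equals F (γ t)
  have hclqt : cl (q t) = q t := by
    have := htt.2
    simp only [hcl_def]
    rw [min_eq_left (by linarith [this.2]), max_eq_right (by linarith [this.1])]
  have hinv : e.symm (q t) = t := by
    have := e.left_inv htt.1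
    rwa [he_coe] at this
  have hWq : g' (q t) = F (γ t) := by
    simp only [hg'_def, hclqt, hg_def, hinv]
  -- compute derivatives of Ĥ
  have hHd : DifferentiableAt ℝ H (γ t) := (hH.differentiable one_ne_zero) (γ t)
  have hWfst : HasFDerivAt (fun x : ℝ × ℝ => W x.1)
      (((1 : ℝ →L[ℝ] ℝ).smulRight (g' ((γ t).1))).comp (ContinuousLinearMap.fst ℝ ℝ ℝ)) (γ t) :=
    (hW' ((γ t).1)).hasFDerivAt.comp (γ t) (hasFDerivAt_fst)
  have hHW : HasFDerivAt (fun x : ℝ × ℝ => H x - W x.1)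
      (fderiv ℝ H (γ t) -
        ((1 : ℝ →L[ℝ] ℝ).smulRight (g' ((γ t).1))).comp (ContinuousLinearMap.fst ℝ ℝ ℝ)) (γ t) :=
    hHd.hasFDerivAt.sub hWfst
  have hfd := hHW.fderiv
  have hpdp_eq : pdp (fun x => H x - W x.1) (γ t) = pdp H (γ t) := by
    simp [pdp, hfd]
  have hpdq_eq : pdq (fun x => H x - W x.1) (γ t) = pdq H (γ t) - F (γ t) := by
    simp only [pdq, hfd, ContinuousLinearMap.sub_apply, ContinuousLinearMap.comp_apply,
      ContinuousLinearMap.coe_fst', ContinuousLinearMap.smulRight_apply,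
      ContinuousLinearMap.one_apply]
    rw [← hWq]
    simp [hq_def]
  rw [hpdp_eq, hpdq_eq]
  have := hγ t
  convert this using 2
  ring
end

section
/- In the setting of the previous construction, the conservative system x'' + kx + ϱ(x) = 0 with ϱ(x) = c·q'(q^{-1}(x)) has conserved energy Ĥ(x, x') = (1/2)(x')^2 + (1/2) k x^2 + ∫_{q₀}^{x} ϱ(s) ds, and the value of Ĥ along the common solution q(t) equals the total energy of the damped system (mechanical energy plus cumulative work dissipated) up to the additive constant -W(q₀). -/
open Set intervalIntegral MeasureTheory Filter Topology

private lemma monodn {f : ℝ → ℝ} {a b x d : ℝ} (hab : a < b)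
    (hm : MonotoneOn f (Icc a b)) (hx : x ∈ Icc a b) (hd : HasDerivAt f d x) : 0 ≤ d := by
  have h := hasDerivAt_iff_tendsto_slope.1 hd
  rcases lt_or_eq_of_le hx.2 with hxb | hxb
  · have h' : Tendsto (slope f x) (𝓝[>] x) (𝓝 d) :=
      h.mono_left (nhdsWithin_mono _ fun y hy => ne_of_gt hy)
    refine ge_of_tendsto h' ?_
    filter_upwards [Ioo_mem_nhdsGT_of_mem ⟨le_refl x, hxb⟩] with y hy
    have hfy : f x ≤ f y := hm hx ⟨hx.1.trans hy.1.le, hy.2.le⟩ hy.1.le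
    rw [slope_def_field]
    exact div_nonneg (sub_nonneg.2 hfy) (sub_nonneg.2 hy.1.le)
  · have hax : a < x := hxb ▸ hab
    have h' : Tendsto (slope f x) (𝓝[<] x) (𝓝 d) :=
      h.mono_left (nhdsWithin_mono _ fun y hy => ne_of_lt hy)
    refine ge_of_tendsto h' ?_
    filter_upwards [Ioo_mem_nhdsLT_of_mem ⟨hax, le_refl x⟩] with y hy
    have hfy : f y ≤ f x := hm ⟨hy.1.le, hy.2.le.trans hx.2⟩ hx hy.2.le
    rw [slope_def_field]
    exact div_nonneg_iff.mpr (Or.inr ⟨sub_nonpos.2 hfy, sub_nonpos.2 hy.2.le⟩)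

/-- The substituting conservative system has conserved energy
`Ĥ(x,x') = ½(x')² + ½kx² + ∫_{q₀}^x ϱ`, and along the common solution `q` its value
equals the total energy (mechanical plus dissipated work) of the damped system,
up to the additive constant `-W(q₀) = 0`. -/
theorem stmt_8 (c k : ℝ) (q : ℝ → ℝ) (hq : ContDiff ℝ 2 q)
    (hode : ∀ t, deriv (deriv q) t + c * deriv q t + k * q t = 0)
    (q₀ : ℝ) (hq0 : q 0 = q₀)
    (I : Set ℝ) (hI : I.OrdConnected) (h0I : (0:ℝ) ∈ I)
    (hmono : StrictMonoOn q I ∨ StrictAntiOn q I)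
    (ϱ W Ehat Etot : ℝ → ℝ)
    (hϱ : ∀ x ∈ q '' I, ϱ x = c * deriv q (Function.invFunOn q I x))
    (hW : ∀ x, W x = ∫ s in q₀..x, ϱ s)
    (hEhat : ∀ t, Ehat t = (1/2) * (deriv q t)^2 + (1/2) * k * (q t)^2 + W (q t))
    (hEtot : ∀ t, Etot t = (1/2) * (deriv q t)^2 + (1/2) * k * (q t)^2
        + c * ∫ s in (0:ℝ)..t, (deriv q s)^2) :
    (∀ t ∈ I, Ehat t = Ehat 0) ∧ (∀ t ∈ I, Ehat t = Etot t - W q₀) := by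
  subst hq0
  have hdq : Differentiable ℝ q := hq.differentiable two_ne_zero
  have hc1 : ContDiff ℝ 1 (deriv q) := by
    have := (contDiff_succ_iff_deriv (n := 1)).mp (by exact_mod_cast hq)
    exact this.2.2
  have hdq' : Differentiable ℝ (deriv q) := hc1.differentiable one_ne_zero
  have hcontq' : Continuous (deriv q) := hdq'.continuous
  have hinjI : InjOn q I := by
    rcases hmono with h | h
    · exact h.injOn
    · exact h.injOn
  have hWq0 : W (q 0) = 0 := by rw [hW, integral_same]
  -- key: for t ∈ I, W (q t) = c * ∫ s in 0..t, (deriv q s)^2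
  have key : ∀ t ∈ I, W (q t) = c * ∫ s in (0:ℝ)..t, (deriv q s)^2 := by
    intro t ht
    rcases eq_or_ne t 0 with rfl | htne
    · simp [hWq0]
    have jac : ∀ a b : ℝ, a ≤ b → Icc a b ⊆ I →
        (∫ x in q '' Icc a b, ϱ x) = ∫ x in Icc a b, |deriv q x| * ϱ (q x) := by
      intro a b hab hsub
      exact integral_image_eq_integral_abs_deriv_smul measurableSet_Icc
        (fun x _ => (hdq x).hasDerivAt.hasDerivWithinAt) (hinjI.mono hsub) ϱ
    have hϱq : ∀ x ∈ I, ϱ (q x) = c * deriv q x := by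
      intro x hx
      rw [hϱ (q x) (mem_image_of_mem q hx), hinjI.leftInvOn_invFunOn hx]
    rcases le_total 0 t with h0t | h0t
    · have hlt : (0:ℝ) < t := lt_of_le_of_ne h0t (Ne.symm htne)
      have hsub : Icc (0:ℝ) t ⊆ I := hI.out h0I ht
      have hcont : ContinuousOn q (Icc (0:ℝ) t) := hdq.continuous.continuousOn
      rcases hmono with hm | hm
      · have hmI : MonotoneOn q (Icc (0:ℝ) t) := (hm.monotoneOn).mono hsub
        have himg : q '' Icc 0 t = Icc (q 0) (q t) := by
          apply Subset.antisymm
          · rintro _ ⟨x, hx, rfl⟩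
            exact ⟨hmI ⟨le_refl 0, h0t⟩ hx hx.1, hmI hx ⟨h0t, le_refl t⟩ hx.2⟩
          · exact intermediate_value_Icc h0t hcont
        have hqle : q 0 ≤ q t := hm.monotoneOn h0I ht h0t
        have hnn : ∀ x ∈ Icc (0:ℝ) t, 0 ≤ deriv q x := fun x hx =>
          monodn hlt hmI hx (hdq x).hasDerivAt
        rw [hW, integral_of_le hqle, ← integral_Icc_eq_integral_Ioc, ← himg, jac 0 t h0t hsub,
          integral_of_le h0t, ← integral_Icc_eq_integral_Ioc, ← MeasureTheory.integral_const_mul]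
        apply setIntegral_congr_fun measurableSet_Icc
        intro x hx
        dsimp only
        rw [hϱq x (hsub hx), abs_of_nonneg (hnn x hx)]
        ring
      · have hmI : AntitoneOn q (Icc (0:ℝ) t) := (hm.antitoneOn).mono hsub
        have himg : q '' Icc 0 t = Icc (q t) (q 0) := by
          apply Subset.antisymm
          · rintro _ ⟨x, hx, rfl⟩
            exact ⟨hmI hx ⟨h0t, le_refl t⟩ hx.2, hmI ⟨le_refl 0, h0t⟩ hx hx.1⟩
          · have := intermediate_value_Icc' h0t hcont
            exact this
        have hqle : q t ≤ q 0 := hm.antitoneOn h0I ht h0t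
        have hnp : ∀ x ∈ Icc (0:ℝ) t, 0 ≤ -deriv q x := by
          intro x hx
          have hmneg : MonotoneOn (fun y => -q y) (Icc (0:ℝ) t) := fun y hy z hz hyz =>
            neg_le_neg (hmI hy hz hyz)
          exact monodn hlt hmneg hx ((hdq x).hasDerivAt.neg)
        rw [hW, integral_symm, integral_of_le hqle, ← integral_Icc_eq_integral_Ioc, ← himg,
          jac 0 t h0t hsub, integral_of_le h0t, ← integral_Icc_eq_integral_Ioc,
          ← MeasureTheory.integral_const_mul, ← MeasureTheory.integral_neg]
        apply setIntegral_congr_fun measurableSet_Icc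
        intro x hx
        dsimp only
        rw [hϱq x (hsub hx), abs_of_nonpos (by linarith [hnp x hx])]
        ring
    · have hlt : t < 0 := lt_of_le_of_ne h0t htne
      have hsub : Icc t (0:ℝ) ⊆ I := hI.out ht h0I
      have hcont : ContinuousOn q (Icc t (0:ℝ)) := hdq.continuous.continuousOn
      rcases hmono with hm | hm
      · have hmI : MonotoneOn q (Icc t (0:ℝ)) := (hm.monotoneOn).mono hsub
        have himg : q '' Icc t 0 = Icc (q t) (q 0) := by
          apply Subset.antisymm
          · rintro _ ⟨x, hx, rfl⟩
            exact ⟨hmI ⟨le_refl t, h0t⟩ hx hx.1, hmI hx ⟨h0t, le_refl 0⟩ hx.2⟩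
          · exact intermediate_value_Icc h0t hcont
        have hqle : q t ≤ q 0 := hm.monotoneOn ht h0I h0t
        have hnn : ∀ x ∈ Icc t (0:ℝ), 0 ≤ deriv q x := fun x hx =>
          monodn hlt hmI hx (hdq x).hasDerivAt
        rw [hW, integral_symm, integral_of_le hqle, ← integral_Icc_eq_integral_Ioc, ← himg,
          jac t 0 h0t hsub, integral_symm, integral_of_le h0t,
          ← integral_Icc_eq_integral_Ioc, mul_neg, neg_inj, ← MeasureTheory.integral_const_mul]
        apply setIntegral_congr_fun measurableSet_Icc
        intro x hx
        dsimp only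
        rw [hϱq x (hsub hx), abs_of_nonneg (hnn x hx)]
        ring
      · have hmI : AntitoneOn q (Icc t (0:ℝ)) := (hm.antitoneOn).mono hsub
        have himg : q '' Icc t 0 = Icc (q 0) (q t) := by
          apply Subset.antisymm
          · rintro _ ⟨x, hx, rfl⟩
            exact ⟨hmI hx ⟨h0t, le_refl 0⟩ hx.2, hmI ⟨le_refl t, h0t⟩ hx hx.1⟩
          · exact intermediate_value_Icc' h0t hcont
        have hqle : q 0 ≤ q t := hm.antitoneOn ht h0I h0t
        have hnp : ∀ x ∈ Icc t (0:ℝ), 0 ≤ -deriv q x := by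
          intro x hx
          have hmneg : MonotoneOn (fun y => -q y) (Icc t (0:ℝ)) := fun y hy z hz hyz =>
            neg_le_neg (hmI hy hz hyz)
          exact monodn hlt hmneg hx ((hdq x).hasDerivAt.neg)
        rw [hW, integral_of_le hqle, ← integral_Icc_eq_integral_Ioc, ← himg,
          jac t 0 h0t hsub, integral_symm, integral_of_le h0t,
          ← integral_Icc_eq_integral_Ioc, mul_neg, ← MeasureTheory.integral_const_mul, ← MeasureTheory.integral_neg]
        apply setIntegral_congr_fun measurableSet_Icc
        intro x hx
        dsimp only
        rw [hϱq x (hsub hx), abs_of_nonpos (by linarith [hnp x hx])]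
        ring
  -- Etot is constant
  have hEtotD : ∀ t, HasDerivAt Etot 0 t := by
    have hfun : Etot = fun t => (1/2) * (deriv q t)^2 + (1/2) * k * (q t)^2
        + c * ∫ s in (0:ℝ)..t, (deriv q s)^2 := funext hEtot
    have hcont2 : Continuous fun s => (deriv q s)^2 := hcontq'.pow 2
    intro t
    have hv : HasDerivAt (deriv q) (deriv (deriv q) t) t := (hdq' t).hasDerivAt
    have h1 : HasDerivAt (fun s => (1/2) * (deriv q s)^2)
        (deriv q t * deriv (deriv q) t) t := by
      have : HasDerivAt (fun s => (1/2) * (deriv q s)^2) _ t := (hv.pow 2).const_mul (1/2 : ℝ)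
      convert this using 1
      ring
    have h2 : HasDerivAt (fun s => (1/2) * k * (q s)^2) (k * q t * deriv q t) t := by
      have : HasDerivAt (fun s => (1/2) * k * (q s)^2) _ t :=
        ((hdq t).hasDerivAt.pow 2).const_mul ((1/2) * k : ℝ)
      convert this using 1
      ring
    have h3 : HasDerivAt (fun u => c * ∫ s in (0:ℝ)..u, (deriv q s)^2)
        (c * (deriv q t)^2) t := by
      have hF : HasDerivAt (fun u => ∫ s in (0:ℝ)..u, (deriv q s)^2) ((deriv q t)^2) t :=
        intervalIntegral.integral_hasDerivAt_right (hcont2.intervalIntegrable 0 t)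
          (hcont2.stronglyMeasurableAtFilter _ _) hcont2.continuousAt
      exact hF.const_mul c
    have hsum := (h1.add h2).add h3
    simp only [Pi.add_def] at hsum
    rw [← hfun] at hsum
    have heq : deriv q t * deriv (deriv q) t + k * q t * deriv q t + c * (deriv q t)^2 = 0 := by
      linear_combination (deriv q t) * hode t
    exact heq ▸ hsum
  have hEtotConst : ∀ t, Etot t = Etot 0 := by
    intro t
    exact is_const_of_deriv_eq_zero (fun x => (hEtotD x).differentiableAt)
      (fun x => (hEtotD x).deriv) t 0
  have hEq : ∀ t ∈ I, Ehat t = Etot t := by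
    intro t ht
    rw [hEhat, hEtot, key t ht]
  refine ⟨fun t ht => ?_, fun t ht => ?_⟩
  · rw [hEq t ht, hEtotConst t, ← hEq 0 h0I]
  · rw [hEq t ht, hWq0, sub_zero]
end
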